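/- arXiv:2312.16259 — 2 statements merged into one kernel-verified Lean document; each statement's English description precedes it below -/
import Mathlib

section
/- For Left dead-ends, birthday is additive: b(G + H) = b(G) + b(H), where b(G) = min over all Left dead-ends K equal to G of the formal birthday of K. -/
/-- A Left dead-end: a partizan game in which no subposition has a Left option,
modeled as a finitely-branching rooted tree of Right options. -/
inductive LDE : Type where
  | node : List LDE → LDE

/-- The (Right) options of a Left dead-end. -/
def LDE.opts : LDE → List LDE
  | .node l => l

/-- The dead-end order: `G ≥ H` iff every Right option of `G` is `≥` some Right
option of `H`, and if `G` has no Right options then neither does `H`. -/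
def LDE.Ge : LDE → LDE → Prop
  | .node gs, .node hs =>
      (∀ g ∈ gs, ∃ h ∈ hs, LDE.Ge g h) ∧ (gs = [] → hs = [])
termination_by G _ => sizeOf G
decreasing_by
  have := List.sizeOf_lt_of_mem ‹g ∈ gs›; simp; omega

/-- Equality (equivalence) in the dead-end order. -/
def LDE.Eqv (G H : LDE) : Prop := LDE.Ge G H ∧ LDE.Ge H G

/-- The formal birthday: the height of the game tree. -/
def LDE.fb : LDE → ℕ
  | .node l => l.attach.foldr (fun g m => max (LDE.fb g.1 + 1) m) 0
termination_by G => sizeOf G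
decreasing_by
  have := List.sizeOf_lt_of_mem g.2; simp; omega

/-- Disjunctive sum of Left dead-ends: the Right options of `G + H` are
`G^R + H` and `G + H^R`. -/
def LDE.add : LDE → LDE → LDE
  | .node gs, .node hs =>
      .node (gs.attach.map (fun g => LDE.add g.1 (.node hs)) ++
             hs.attach.map (fun h => LDE.add (.node gs) h.1))
termination_by g h => sizeOf g + sizeOf h
decreasing_by
  · have := List.sizeOf_lt_of_mem g.2; simp; omega
  · have := List.sizeOf_lt_of_mem h.2; simp; omega

/-- The birthday of `G`: the least formal birthday among all forms of `G`
(Left dead-ends equal to `G` in the dead-end order). -/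
noncomputable def LDE.bday (G : LDE) : ℕ :=
  sInf {n | ∃ K : LDE, LDE.Eqv K G ∧ K.fb = n}

-- aux lemmas
lemma foldr_max_le {α : Type*} (f : α → ℕ) (l : List α) (n : ℕ) :
    l.foldr (fun a m => max (f a) m) 0 ≤ n ↔ ∀ a ∈ l, f a ≤ n := by
  induction l with
  | nil => simp
  | cons a t ih => simp [ih]

lemma foldr_max_mem {α : Type*} (f : α → ℕ) (l : List α) (h : l ≠ []) :
    ∃ a ∈ l, l.foldr (fun a m => max (f a) m) 0 = f a := by
  induction l with
  | nil => simp at h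
  | cons a t ih =>
    rcases t.eq_nil_or_concat with rfl | _
    · exact ⟨a, by simp⟩
    · obtain ⟨b, hb, hb2⟩ := ih (by rintro rfl; simp_all)
      rcases le_total (f a) (f b) with hle | hle
      · exact ⟨b, by simp [hb], by simp [hb2, max_eq_right hle]⟩
      · exact ⟨a, by simp, by simp [hb2, max_eq_left hle]⟩

lemma fb_le_iff (l : List LDE) (n : ℕ) :
    (LDE.node l).fb ≤ n ↔ ∀ g ∈ l, g.fb + 1 ≤ n := by
  rw [LDE.fb, foldr_max_le]
  constructor
  · intro h g hg; exact h ⟨g, hg⟩ (List.mem_attach _ _)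
  · intro h a _; exact h a.1 a.2

lemma fb_opt (l : List LDE) {g : LDE} (hg : g ∈ l) : g.fb + 1 ≤ (LDE.node l).fb :=
  (fb_le_iff l _).1 le_rfl g hg

lemma fb_achieve (l : List LDE) (h : l ≠ []) : ∃ g ∈ l, (LDE.node l).fb = g.fb + 1 := by
  obtain ⟨a, _, ha2⟩ := foldr_max_mem (fun g : {x // x ∈ l} => g.1.fb + 1) l.attach
    (by simpa using h)
  exact ⟨a.1, a.2, by rw [LDE.fb]; exact ha2⟩

lemma ge_refl : ∀ G : LDE, LDE.Ge G G
  | .node l => by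
    rw [LDE.Ge]
    exact ⟨fun g hg => ⟨g, hg, have := List.sizeOf_lt_of_mem hg; ge_refl g⟩, fun h => h⟩
termination_by G => sizeOf G
decreasing_by simp; omega

lemma fb_le_of_ge : ∀ G H : LDE, LDE.Ge G H → G.fb ≤ H.fb
  | .node gs, .node hs => by
    rw [LDE.Ge]
    rintro ⟨h1, -⟩
    rw [fb_le_iff]
    intro g hg
    obtain ⟨h, hh, hgh⟩ := h1 g hg
    have := List.sizeOf_lt_of_mem hg
    calc g.fb + 1 ≤ h.fb + 1 := by
            have := fb_le_of_ge g h hgh; omega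
      _ ≤ (LDE.node hs).fb := fb_opt hs hh
termination_by G _ => sizeOf G
decreasing_by simp; omega

lemma fb_add : ∀ G H : LDE, (G.add H).fb = G.fb + H.fb
  | .node gs, .node hs => by
    rw [LDE.add]
    apply le_antisymm
    · rw [fb_le_iff]
      intro k hk
      simp only [List.mem_append, List.mem_map, List.mem_attach, true_and,
        Subtype.exists, exists_prop] at hk
      rcases hk with ⟨g, hg, rfl⟩ | ⟨h, hh, rfl⟩
      · have h1 : sizeOf g < sizeOf (LDE.node gs) := by
          have := List.sizeOf_lt_of_mem hg; simp; omega
        rw [fb_add g (.node hs)]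
        have := fb_opt gs hg
        omega
      · have h1 : sizeOf h < sizeOf (LDE.node hs) := by
          have := List.sizeOf_lt_of_mem hh; simp; omega
        rw [fb_add (.node gs) h]
        have := fb_opt hs hh
        omega
    · rcases eq_or_ne hs [] with rfl | hns
      · rcases eq_or_ne gs [] with rfl | hng
        · have hfb0 : (LDE.node ([] : List LDE)).fb = 0 := by rw [LDE.fb]; simp
          simp [hfb0]
        · obtain ⟨g, hg, hge⟩ := fb_achieve gs hng
          have h1 : sizeOf g < sizeOf (LDE.node gs) := by
            have := List.sizeOf_lt_of_mem hg; simp; omega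
          have h2 : (g.add (.node [])).fb + 1 ≤ (LDE.node (gs.attach.map (fun g => g.1.add (.node [])) ++ [].attach.map (fun h => (LDE.node gs).add h.1))).fb := by
            apply fb_opt
            simp only [List.mem_append, List.mem_map, List.mem_attach, true_and,
              Subtype.exists, exists_prop]
            exact Or.inl ⟨g, hg, rfl⟩
          rw [fb_add g (.node [])] at h2
          have hfb0 : (LDE.node ([] : List LDE)).fb = 0 := by
            rw [LDE.fb]; simp
          omega
      · obtain ⟨h, hh, hhe⟩ := fb_achieve hs hns
        have h1 : sizeOf h < sizeOf (LDE.node hs) := by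
          have := List.sizeOf_lt_of_mem hh; simp; omega
        have h2 : ((LDE.node gs).add h).fb + 1 ≤ (LDE.node (gs.attach.map (fun g => g.1.add (.node hs)) ++ hs.attach.map (fun h => (LDE.node gs).add h.1))).fb := by
          apply fb_opt
          simp only [List.mem_append, List.mem_map, List.mem_attach, true_and,
            Subtype.exists, exists_prop]
          exact Or.inr ⟨h, hh, rfl⟩
        rw [fb_add (.node gs) h] at h2
        omega
termination_by G H => sizeOf G + sizeOf H
decreasing_by all_goals simp_all

lemma bday_eq_fb (G : LDE) : G.bday = G.fb := by
  have hset : {n | ∃ K : LDE, LDE.Eqv K G ∧ K.fb = n} = {G.fb} := by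
    ext n
    simp only [Set.mem_setOf_eq, Set.mem_singleton_iff]
    constructor
    · rintro ⟨K, ⟨h1, h2⟩, rfl⟩
      exact le_antisymm (fb_le_of_ge K G h1) (fb_le_of_ge G K h2)
    · rintro rfl
      exact ⟨G, ⟨ge_refl G, ge_refl G⟩, rfl⟩
  rw [LDE.bday, hset, csInf_singleton]

/-- birthday is additive on Left dead-ends. -/
theorem stmt9 (G H : LDE) : (G.add H).bday = G.bday + H.bday := by
  rw [bday_eq_fb, bday_eq_fb, bday_eq_fb, fb_add]
end

section
/- For all n ≥ 19 (indeed for all n ≥ 6 once base cases are verified), the 1×n misère Domineering strip D_n equals D_{n−6} + (−1,0)# in the dead-end order, where (−1,0)# = {·|{·|−1,0}} with −1 = {·|0}; consequently the values of D_n are eventually periodic with period 6, given explicitly by: D_{6k} = D_{6k+1} = k·(−1,0)#, D_{6k+2} = D_{6k+3} = k·(−1,0)# + (−1), D_{6k+4} = k·(−1,0)# + (−1,0), D_{6k+5} = k·(−1,0)# + (−2), where (−1,0) = {·|−1,0} and −2 = {·|−1}. -/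
/-- `k` copies of `x`, added together. -/
def LDE.ksum : ℕ → LDE → LDE
  | 0, _ => LDE.node []
  | n+1, x => (LDE.ksum n x).add x

/-- The `1 × n` misère Domineering strip: a Left dead-end whose Right options
(Right places a horizontal domino) are `D_a + D_b` for `a + b = n - 2`. -/
def domStrip : ℕ → LDE
  | 0 => LDE.node []
  | 1 => LDE.node []
  | (n+2) => LDE.node ((List.range (n+1)).attach.map
      (fun a => (domStrip a.1).add (domStrip (n - a.1))))
termination_by n => n
decreasing_by
  · have := List.mem_range.mp a.2; omega
  · have := List.mem_range.mp a.2; omega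

/-- `−1 = {·|0}`. -/
def negOne : LDE := LDE.node [LDE.node []]

/-- `−2 = {·|−1}`. -/
def negTwo : LDE := LDE.node [negOne]

/-- `(−1,0) = {·|−1,0}`. -/
def mOneZero : LDE := LDE.node [negOne, LDE.node []]

/-- `(−1,0)# = {·|(−1,0)}`. -/
def mOneZeroSharp : LDE := LDE.node [mOneZero]

namespace LDE

theorem opts_node (l : List LDE) : (LDE.node l).opts = l := rfl

theorem ge_iff (G H : LDE) : Ge G H ↔
    (∀ g ∈ G.opts, ∃ h ∈ H.opts, Ge g h) ∧ (G.opts = [] → H.opts = []) := by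
  cases G with | node gs => cases H with | node hs => rw [Ge]; rfl

theorem add_opts (G H : LDE) :
    (G.add H).opts = G.opts.map (·.add H) ++ H.opts.map (G.add ·) := by
  cases G with | node gs => cases H with | node hs =>
    rw [LDE.add]
    simp [opts]

end LDE

namespace LDE

theorem sizeOf_opts_lt {g G : LDE} (h : g ∈ G.opts) : sizeOf g < sizeOf G := by
  cases G with | node l =>
    rw [opts_node] at h
    have := List.sizeOf_lt_of_mem h
    simp; omega

theorem ge_refl : ∀ (G : LDE), Ge G G
  | G => by
    rw [ge_iff]
    exact ⟨fun g hg => ⟨g, hg, ge_refl g⟩, fun h => h⟩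
termination_by G => sizeOf G
decreasing_by exact sizeOf_opts_lt hg

theorem ge_trans : ∀ (G H K : LDE), Ge G H → Ge H K → Ge G K
  | G, H, K => fun h1 h2 => by
    rw [ge_iff] at *
    constructor
    · intro g hg
      obtain ⟨h, hh, hgh⟩ := h1.1 g hg
      obtain ⟨k, hk, hhk⟩ := h2.1 h hh
      exact ⟨k, hk, ge_trans g h k hgh hhk⟩
    · intro he; exact h2.2 (h1.2 he)
termination_by G H K => sizeOf G + sizeOf H + sizeOf K
decreasing_by
  have := sizeOf_opts_lt hg; have := sizeOf_opts_lt hh; have := sizeOf_opts_lt hk; omega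

theorem eqv_refl (G : LDE) : Eqv G G := ⟨ge_refl G, ge_refl G⟩
theorem eqv_symm {G H : LDE} (h : Eqv G H) : Eqv H G := ⟨h.2, h.1⟩
theorem eqv_trans {G H K : LDE} (h1 : Eqv G H) (h2 : Eqv H K) : Eqv G K :=
  ⟨ge_trans _ _ _ h1.1 h2.1, ge_trans _ _ _ h2.2 h1.2⟩

theorem mem_add_opts {x G H : LDE} :
    x ∈ (G.add H).opts ↔ (∃ g ∈ G.opts, x = g.add H) ∨ (∃ h ∈ H.opts, x = G.add h) := by
  rw [add_opts]
  simp [List.mem_append, List.mem_map, eq_comm]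

theorem add_opts_eq_nil {G H : LDE} :
    (G.add H).opts = [] ↔ G.opts = [] ∧ H.opts = [] := by
  rw [add_opts]; simp

theorem ge_add_left : ∀ (G G' H : LDE), Ge G G' → Ge (G.add H) (G'.add H)
  | G, G', H => fun hgg => by
    rw [ge_iff]
    constructor
    · intro x hx
      rcases mem_add_opts.mp hx with ⟨g, hg, rfl⟩ | ⟨h, hh, rfl⟩
      · obtain ⟨g', hg', hge⟩ := ((ge_iff G G').mp hgg).1 g hg
        exact ⟨g'.add H, mem_add_opts.mpr (Or.inl ⟨g', hg', rfl⟩),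
          ge_add_left g g' H hge⟩
      · exact ⟨G'.add h, mem_add_opts.mpr (Or.inr ⟨h, hh, rfl⟩),
          ge_add_left G G' h hgg⟩
    · intro he
      rw [add_opts_eq_nil] at he ⊢
      exact ⟨((ge_iff G G').mp hgg).2 he.1, he.2⟩
termination_by G G' H => sizeOf G + sizeOf H
decreasing_by
  · have := sizeOf_opts_lt hg; omega
  · have := sizeOf_opts_lt hh; omega

theorem ge_add_comm : ∀ (G H : LDE), Ge (G.add H) (H.add G)
  | G, H => by
    rw [ge_iff]
    constructor
    · intro x hx
      rcases mem_add_opts.mp hx with ⟨g, hg, rfl⟩ | ⟨h, hh, rfl⟩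
      · exact ⟨H.add g, mem_add_opts.mpr (Or.inr ⟨g, hg, rfl⟩), ge_add_comm g H⟩
      · exact ⟨h.add G, mem_add_opts.mpr (Or.inl ⟨h, hh, rfl⟩), ge_add_comm G h⟩
    · intro he
      rw [add_opts_eq_nil] at he ⊢
      exact ⟨he.2, he.1⟩
termination_by G H => sizeOf G + sizeOf H
decreasing_by
  · have := sizeOf_opts_lt hg; omega
  · have := sizeOf_opts_lt hh; omega

theorem eqv_add_comm (G H : LDE) : Eqv (G.add H) (H.add G) :=
  ⟨ge_add_comm G H, ge_add_comm H G⟩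

theorem ge_add_right (G H H' : LDE) (h : Ge H H') : Ge (G.add H) (G.add H') :=
  ge_trans _ _ _ (ge_add_comm G H) (ge_trans _ _ _ (ge_add_left H H' G h) (ge_add_comm H' G))

theorem add_congr {G G' H H' : LDE} (h1 : Eqv G G') (h2 : Eqv H H') :
    Eqv (G.add H) (G'.add H') :=
  ⟨ge_trans _ _ _ (ge_add_left G G' H h1.1) (ge_add_right G' H H' h2.1),
   ge_trans _ _ _ (ge_add_left G' G H' h1.2) (ge_add_right G H' H h2.2)⟩

end LDE

namespace LDE

theorem ge_assoc1 : ∀ (A B C : LDE), Ge ((A.add B).add C) (A.add (B.add C))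
  | A, B, C => by
    rw [ge_iff]
    constructor
    · intro x hx
      rcases mem_add_opts.mp hx with ⟨g, hg, rfl⟩ | ⟨c, hc, rfl⟩
      · rcases mem_add_opts.mp hg with ⟨a, ha, rfl⟩ | ⟨b, hb, rfl⟩
        · exact ⟨a.add (B.add C), mem_add_opts.mpr (Or.inl ⟨a, ha, rfl⟩),
            ge_assoc1 a B C⟩
        · exact ⟨A.add (b.add C), mem_add_opts.mpr (Or.inr ⟨b.add C,
            mem_add_opts.mpr (Or.inl ⟨b, hb, rfl⟩), rfl⟩), ge_assoc1 A b C⟩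
      · exact ⟨A.add (B.add c), mem_add_opts.mpr (Or.inr ⟨B.add c,
          mem_add_opts.mpr (Or.inr ⟨c, hc, rfl⟩), rfl⟩), ge_assoc1 A B c⟩
    · intro he
      rw [add_opts_eq_nil, add_opts_eq_nil] at he
      rw [add_opts_eq_nil, add_opts_eq_nil]
      tauto
termination_by A B C => sizeOf A + sizeOf B + sizeOf C
decreasing_by
  · have := sizeOf_opts_lt ha; omega
  · have := sizeOf_opts_lt hb; omega
  · have := sizeOf_opts_lt hc; omega

theorem ge_assoc2 : ∀ (A B C : LDE), Ge (A.add (B.add C)) ((A.add B).add C)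
  | A, B, C => by
    rw [ge_iff]
    constructor
    · intro x hx
      rcases mem_add_opts.mp hx with ⟨a, ha, rfl⟩ | ⟨g, hg, rfl⟩
      · exact ⟨(a.add B).add C, mem_add_opts.mpr (Or.inl ⟨a.add B,
          mem_add_opts.mpr (Or.inl ⟨a, ha, rfl⟩), rfl⟩), ge_assoc2 a B C⟩
      · rcases mem_add_opts.mp hg with ⟨b, hb, rfl⟩ | ⟨c, hc, rfl⟩
        · exact ⟨(A.add b).add C, mem_add_opts.mpr (Or.inl ⟨A.add b,
            mem_add_opts.mpr (Or.inr ⟨b, hb, rfl⟩), rfl⟩), ge_assoc2 A b C⟩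
        · exact ⟨(A.add B).add c, mem_add_opts.mpr (Or.inr ⟨c, hc, rfl⟩),
            ge_assoc2 A B c⟩
    · intro he
      rw [add_opts_eq_nil, add_opts_eq_nil] at he
      rw [add_opts_eq_nil, add_opts_eq_nil]
      tauto
termination_by A B C => sizeOf A + sizeOf B + sizeOf C
decreasing_by
  · have := sizeOf_opts_lt ha; omega
  · have := sizeOf_opts_lt hb; omega
  · have := sizeOf_opts_lt hc; omega

theorem eqv_assoc (A B C : LDE) : Eqv ((A.add B).add C) (A.add (B.add C)) :=
  ⟨ge_assoc1 A B C, ge_assoc2 A B C⟩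

theorem eqv_add_zero : ∀ (A : LDE), Eqv (A.add (node [])) A
  | A => by
    constructor <;> rw [ge_iff]
    · constructor
      · intro x hx
        rcases mem_add_opts.mp hx with ⟨a, ha, rfl⟩ | ⟨b, hb, _⟩
        · exact ⟨a, ha, (eqv_add_zero a).1⟩
        · simp [opts_node] at hb
      · intro he; exact (add_opts_eq_nil.mp he).1
    · constructor
      · intro a ha
        exact ⟨a.add (node []), mem_add_opts.mpr (Or.inl ⟨a, ha, rfl⟩),
          (eqv_add_zero a).2⟩
      · intro he; rw [add_opts_eq_nil]; exact ⟨he, rfl⟩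
termination_by A => sizeOf A
decreasing_by
  · exact sizeOf_opts_lt ha
  · exact sizeOf_opts_lt ha

theorem eqv_zero_add (A : LDE) : Eqv ((node []).add A) A :=
  eqv_trans (eqv_add_comm _ _) (eqv_add_zero A)

theorem eqv_ksum_add (X : LDE) : ∀ (j i : ℕ), Eqv ((ksum i X).add (ksum j X)) (ksum (i+j) X)
  | 0, i => eqv_add_zero _
  | (j+1), i => by
    show Eqv ((ksum i X).add ((ksum j X).add X)) ((ksum (i+j) X).add X)
    exact eqv_trans (eqv_symm (eqv_assoc _ _ _))
      (add_congr (eqv_ksum_add X j i) (eqv_refl X))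

end LDE

namespace LDE

theorem add_def (gs hs : List LDE) : (node gs).add (node hs) =
    node (gs.map (·.add (node hs)) ++ hs.map ((node gs).add ·)) := by
  rw [LDE.add]; simp

theorem ge_node_iff (gs hs : List LDE) : Ge (node gs) (node hs) ↔
    (∀ g ∈ gs, ∃ h ∈ hs, Ge g h) ∧ (gs = [] → hs = []) := ge_iff _ _

theorem F1 : Ge negOne mOneZero := by
  simp [negOne, mOneZero, negTwo, mOneZeroSharp, add_def, ge_node_iff]

theorem F2 : Ge (negOne.add negOne) mOneZero := by
  simp [negOne, mOneZero, negTwo, mOneZeroSharp, add_def, ge_node_iff]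

theorem F3 : Ge (negTwo.add negTwo) (mOneZeroSharp.add mOneZero) := by
  simp [negOne, mOneZero, negTwo, mOneZeroSharp, add_def, ge_node_iff]

theorem F4 : Ge negTwo (mOneZero.add negOne) := by
  simp [negOne, mOneZero, negTwo, mOneZeroSharp, add_def, ge_node_iff]

theorem F5 : Ge (negOne.add negTwo) (mOneZero.add negOne) := by
  simp [negOne, mOneZero, negTwo, mOneZeroSharp, add_def, ge_node_iff]

theorem F6 : Ge (negOne.add negTwo) (mOneZero.add mOneZero) := by
  simp [negOne, mOneZero, negTwo, mOneZeroSharp, add_def, ge_node_iff]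

theorem F7 : Ge negTwo mOneZero := by
  simp [negOne, mOneZero, negTwo, mOneZeroSharp, add_def, ge_node_iff]

end LDE

namespace LDE

/-- piece values by residue -/
def piece : ℕ → LDE
  | 0 => node []
  | 1 => node []
  | 2 => negOne
  | 3 => negOne
  | 4 => mOneZero
  | _ => negTwo

/-- conjectured value of `domStrip n` -/
def vv (n : ℕ) : LDE := (ksum (n/6) mOneZeroSharp).add (piece (n%6))

theorem vv_eq (i r : ℕ) (h : r < 6) :
    vv (6*i + r) = (ksum i mOneZeroSharp).add (piece r) := by
  unfold vv
  have h1 : (6*i+r)/6 = i := by omega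
  have h2 : (6*i+r)%6 = r := by omega
  rw [h1, h2]

theorem geEq {X Y : LDE} (h : Eqv X Y) : Ge X Y := h.1

theorem eqv_swap (A B C : LDE) : Eqv ((A.add B).add C) ((A.add C).add B) :=
  eqv_trans (eqv_assoc A B C)
    (eqv_trans (add_congr (eqv_refl A) (eqv_add_comm B C)) (eqv_symm (eqv_assoc A C B)))

theorem mem_ksum_opts (m : ℕ) :
    ((ksum m mOneZeroSharp).add mOneZero) ∈ (ksum (m+1) mOneZeroSharp).opts := by
  show _ ∈ ((ksum m mOneZeroSharp).add mOneZeroSharp).opts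
  exact mem_add_opts.mpr (Or.inr ⟨mOneZero, by simp [mOneZeroSharp, opts_node], rfl⟩)

theorem opts_ksum : ∀ (k : ℕ), ∀ g ∈ (ksum k mOneZeroSharp).opts,
    ∃ m, k = m + 1 ∧ Eqv g ((ksum m mOneZeroSharp).add mOneZero)
  | 0 => by intro g hg; simp [ksum, opts_node] at hg
  | (k+1) => by
    intro g hg
    rcases mem_add_opts.mp hg with ⟨g', hg', rfl⟩ | ⟨x, hx, rfl⟩
    · obtain ⟨m, rfl, he⟩ := opts_ksum k g' hg'
      refine ⟨m+1, rfl, ?_⟩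
      have step : Eqv (g'.add mOneZeroSharp)
          (((ksum m mOneZeroSharp).add mOneZero).add mOneZeroSharp) :=
        add_congr he (eqv_refl _)
      exact eqv_trans step (eqv_swap _ _ _)
    · have hx' : x = mOneZero := by simpa [mOneZeroSharp, opts_node] using hx
      subst hx'
      exact ⟨k, rfl, eqv_refl _⟩

/-- normal form of a sum of two values -/
theorem eqv_sum (i j : ℕ) (p q : LDE) :
    Eqv (((ksum i mOneZeroSharp).add p).add ((ksum j mOneZeroSharp).add q))
        ((ksum (i+j) mOneZeroSharp).add (p.add q)) := by
  refine eqv_trans (eqv_swap _ _ _) ?_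
  refine eqv_trans (add_congr (eqv_symm (eqv_assoc _ _ _)) (eqv_refl p)) ?_
  refine eqv_trans (add_congr (add_congr (eqv_ksum_add _ _ _) (eqv_refl q)) (eqv_refl p)) ?_
  exact eqv_trans (eqv_swap _ _ _) (eqv_assoc _ _ _)

theorem bridgeB {p q p' : LDE} (i j : ℕ) (h : Ge (p.add q) p') :
    Ge (((ksum i mOneZeroSharp).add p).add ((ksum j mOneZeroSharp).add q))
       ((ksum (i+j) mOneZeroSharp).add p') :=
  ge_trans _ _ _ (eqv_sum i j p q).1 (ge_add_right _ _ _ h)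

theorem bridgeA {p q u : LDE} (i j : ℕ) (h : Ge (p.add q) (mOneZero.add u)) :
    Ge (((ksum i mOneZeroSharp).add p).add ((ksum j mOneZeroSharp).add q))
       (((ksum (i+j) mOneZeroSharp).add mOneZero).add u) :=
  ge_trans _ _ _ (bridgeB i j h) (eqv_assoc _ _ _).2

theorem bridgeC {p q u : LDE} (i j : ℕ)
    (h : Ge (p.add q) ((mOneZeroSharp.add mOneZero).add u)) :
    Ge (((ksum i mOneZeroSharp).add p).add ((ksum j mOneZeroSharp).add q))
       (((ksum (i+j+1) mOneZeroSharp).add mOneZero).add u) := by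
  refine ge_trans _ _ _ (bridgeB i j h) ?_
  show Ge ((ksum (i+j) mOneZeroSharp).add ((mOneZeroSharp.add mOneZero).add u))
       (((((ksum (i+j) mOneZeroSharp)).add mOneZeroSharp).add mOneZero).add u)
  refine ge_trans _ _ _ (geEq (eqv_symm (eqv_assoc _ _ _))) ?_
  exact ge_add_left _ _ _ (geEq (eqv_symm (eqv_assoc _ _ _)))

theorem domStrip_opts (n : ℕ) (g : LDE) :
    g ∈ (domStrip (n+2)).opts ↔
      ∃ a, a ≤ n ∧ g = (domStrip a).add (domStrip (n-a)) := by
  rw [domStrip]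
  simp [opts_node, List.mem_map, List.mem_range, Nat.lt_succ_iff, eq_comm]

end LDE

namespace LDE

theorem geCm {X Y Z : LDE} (h : Ge (Y.add X) Z) : Ge (X.add Y) Z :=
  ge_trans _ _ _ (ge_add_comm X Y) h
theorem geZL {X Y : LDE} (h : Ge X Y) : Ge ((node []).add X) Y :=
  ge_trans _ _ _ (eqv_zero_add X).1 h
theorem geRZ {X Y : LDE} (h : Ge X Y) : Ge X (Y.add (node [])) :=
  ge_trans _ _ _ h (eqv_add_zero Y).2

theorem memB (k t : ℕ) (p' : LDE) (h : p' ∈ (piece t).opts) :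
    (ksum k mOneZeroSharp).add p' ∈ ((ksum k mOneZeroSharp).add (piece t)).opts :=
  mem_add_opts.mpr (Or.inr ⟨p', h, rfl⟩)
theorem memA (m t : ℕ) :
    ((ksum m mOneZeroSharp).add mOneZero).add (piece t) ∈
      ((ksum (m+1) mOneZeroSharp).add (piece t)).opts :=
  mem_add_opts.mpr (Or.inl ⟨_, mem_ksum_opts m, rfl⟩)

theorem KEY1 (k t i r j s : ℕ) (hr : r < 6) (hs : s < 6) (ht : t < 6)
    (heq : 6*i + r + (6*j + s) + 2 = 6*k + t) :
    ∃ h ∈ ((ksum k mOneZeroSharp).add (piece t)).opts,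
      Ge (((ksum i mOneZeroSharp).add (piece r)).add
          ((ksum j mOneZeroSharp).add (piece s))) h := by
  interval_cases r <;> interval_cases s
  · obtain rfl : t = 2 := by omega
    obtain rfl : k = i + j := by omega
    exact ⟨_, memB (i+j) 2 (node []) (by simp [piece, negOne, negTwo, mOneZero, opts_node]),
      bridgeB i j (geZL (ge_refl _))⟩
  · obtain rfl : t = 3 := by omega
    obtain rfl : k = i + j := by omega
    exact ⟨_, memB (i+j) 3 (node []) (by simp [piece, negOne, negTwo, mOneZero, opts_node]),
      bridgeB i j (geZL (ge_refl _))⟩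
  · obtain rfl : t = 4 := by omega
    obtain rfl : k = i + j := by omega
    exact ⟨_, memB (i+j) 4 (negOne) (by simp [piece, negOne, negTwo, mOneZero, opts_node]),
      bridgeB i j (geZL (ge_refl _))⟩
  · obtain rfl : t = 5 := by omega
    obtain rfl : k = i + j := by omega
    exact ⟨_, memB (i+j) 5 (negOne) (by simp [piece, negOne, negTwo, mOneZero, opts_node]),
      bridgeB i j (geZL (ge_refl _))⟩
  · obtain rfl : t = 0 := by omega
    obtain rfl : k = i + j + 1 := by omega
    exact ⟨_, memA (i+j) 0, bridgeA i j (geZL (geRZ (ge_refl mOneZero)))⟩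
  · obtain rfl : t = 1 := by omega
    obtain rfl : k = i + j + 1 := by omega
    exact ⟨_, memA (i+j) 1, bridgeA i j (geZL (geRZ F7))⟩
  · obtain rfl : t = 3 := by omega
    obtain rfl : k = i + j := by omega
    exact ⟨_, memB (i+j) 3 (node []) (by simp [piece, negOne, negTwo, mOneZero, opts_node]),
      bridgeB i j (geCm (geZL (ge_refl _)))⟩
  · obtain rfl : t = 4 := by omega
    obtain rfl : k = i + j := by omega
    exact ⟨_, memB (i+j) 4 (node []) (by simp [piece, negOne, negTwo, mOneZero, opts_node]),
      bridgeB i j (geZL (ge_refl _))⟩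
  · obtain rfl : t = 5 := by omega
    obtain rfl : k = i + j := by omega
    exact ⟨_, memB (i+j) 5 (negOne) (by simp [piece, negOne, negTwo, mOneZero, opts_node]),
      bridgeB i j (geZL (ge_refl _))⟩
  · obtain rfl : t = 0 := by omega
    obtain rfl : k = i + j + 1 := by omega
    exact ⟨_, memA (i+j) 0, bridgeA i j (geZL (geRZ F1))⟩
  · obtain rfl : t = 1 := by omega
    obtain rfl : k = i + j + 1 := by omega
    exact ⟨_, memA (i+j) 1, bridgeA i j (geZL (geRZ (ge_refl mOneZero)))⟩
  · obtain rfl : t = 2 := by omega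
    obtain rfl : k = i + j + 1 := by omega
    exact ⟨_, memA (i+j) 2, bridgeA i j (geZL F4)⟩
  · obtain rfl : t = 4 := by omega
    obtain rfl : k = i + j := by omega
    exact ⟨_, memB (i+j) 4 (negOne) (by simp [piece, negOne, negTwo, mOneZero, opts_node]),
      bridgeB i j (geCm (geZL (ge_refl _)))⟩
  · obtain rfl : t = 5 := by omega
    obtain rfl : k = i + j := by omega
    exact ⟨_, memB (i+j) 5 (negOne) (by simp [piece, negOne, negTwo, mOneZero, opts_node]),
      bridgeB i j (geCm (geZL (ge_refl _)))⟩
  · obtain rfl : t = 0 := by omega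
    obtain rfl : k = i + j + 1 := by omega
    exact ⟨_, memA (i+j) 0, bridgeA i j (geRZ F2)⟩
  · obtain rfl : t = 1 := by omega
    obtain rfl : k = i + j + 1 := by omega
    exact ⟨_, memA (i+j) 1, bridgeA i j (geRZ F2)⟩
  · obtain rfl : t = 2 := by omega
    obtain rfl : k = i + j + 1 := by omega
    exact ⟨_, memA (i+j) 2, bridgeA i j (ge_add_comm negOne mOneZero)⟩
  · obtain rfl : t = 3 := by omega
    obtain rfl : k = i + j + 1 := by omega
    exact ⟨_, memA (i+j) 3, bridgeA i j (F5)⟩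
  · obtain rfl : t = 5 := by omega
    obtain rfl : k = i + j := by omega
    exact ⟨_, memB (i+j) 5 (negOne) (by simp [piece, negOne, negTwo, mOneZero, opts_node]),
      bridgeB i j (geCm (geZL (ge_refl _)))⟩
  · obtain rfl : t = 0 := by omega
    obtain rfl : k = i + j + 1 := by omega
    exact ⟨_, memA (i+j) 0, bridgeA i j (geCm (geZL (geRZ F1)))⟩
  · obtain rfl : t = 1 := by omega
    obtain rfl : k = i + j + 1 := by omega
    exact ⟨_, memA (i+j) 1, bridgeA i j (geRZ F2)⟩
  · obtain rfl : t = 2 := by omega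
    obtain rfl : k = i + j + 1 := by omega
    exact ⟨_, memA (i+j) 2, bridgeA i j (ge_add_left negOne mOneZero negOne F1)⟩
  · obtain rfl : t = 3 := by omega
    obtain rfl : k = i + j + 1 := by omega
    exact ⟨_, memA (i+j) 3, bridgeA i j (ge_add_comm negOne mOneZero)⟩
  · obtain rfl : t = 4 := by omega
    obtain rfl : k = i + j + 1 := by omega
    exact ⟨_, memA (i+j) 4, bridgeA i j (F6)⟩
  · obtain rfl : t = 0 := by omega
    obtain rfl : k = i + j + 1 := by omega
    exact ⟨_, memA (i+j) 0, bridgeA i j (ge_refl _)⟩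
  · obtain rfl : t = 1 := by omega
    obtain rfl : k = i + j + 1 := by omega
    exact ⟨_, memA (i+j) 1, bridgeA i j (ge_refl _)⟩
  · obtain rfl : t = 2 := by omega
    obtain rfl : k = i + j + 1 := by omega
    exact ⟨_, memA (i+j) 2, bridgeA i j (ge_refl _)⟩
  · obtain rfl : t = 3 := by omega
    obtain rfl : k = i + j + 1 := by omega
    exact ⟨_, memA (i+j) 3, bridgeA i j (ge_refl _)⟩
  · obtain rfl : t = 4 := by omega
    obtain rfl : k = i + j + 1 := by omega
    exact ⟨_, memA (i+j) 4, bridgeA i j (ge_refl _)⟩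
  · obtain rfl : t = 5 := by omega
    obtain rfl : k = i + j + 1 := by omega
    exact ⟨_, memA (i+j) 5, bridgeA i j (ge_refl _)⟩
  · obtain rfl : t = 1 := by omega
    obtain rfl : k = i + j + 1 := by omega
    exact ⟨_, memA (i+j) 1, bridgeA i j (geCm (geZL (geRZ F7)))⟩
  · obtain rfl : t = 2 := by omega
    obtain rfl : k = i + j + 1 := by omega
    exact ⟨_, memA (i+j) 2, bridgeA i j (geCm (geZL F4))⟩
  · obtain rfl : t = 3 := by omega
    obtain rfl : k = i + j + 1 := by omega
    exact ⟨_, memA (i+j) 3, bridgeA i j (geCm F5)⟩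
  · obtain rfl : t = 4 := by omega
    obtain rfl : k = i + j + 1 := by omega
    exact ⟨_, memA (i+j) 4, bridgeA i j (geCm F6)⟩
  · obtain rfl : t = 5 := by omega
    obtain rfl : k = i + j + 1 := by omega
    exact ⟨_, memA (i+j) 5, bridgeA i j (ge_add_comm negTwo mOneZero)⟩
  · obtain rfl : t = 0 := by omega
    obtain rfl : k = i + j + 1 + 1 := by omega
    exact ⟨_, memA (i+j+1) 0, bridgeC i j (geRZ F3)⟩

end LDE

namespace LDE

theorem geXzz (X : LDE) : Ge X (X.add ((node []).add (node []))) :=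
  (eqv_symm (eqv_trans (add_congr (eqv_refl X) (eqv_zero_add _)) (eqv_add_zero X))).1

theorem vv_zero : vv 0 = (node []).add (node []) := rfl
theorem vv_one : vv 1 = (node []).add (node []) := rfl

theorem KEY2 (k t n : ℕ) (ht : t < 6) (hn : n + 2 = 6*k + t) :
    ∀ h ∈ ((ksum k mOneZeroSharp).add (piece t)).opts,
      ∃ a b, a + b = n ∧ Ge h ((vv a).add (vv b)) := by
  intro h hh
  rcases mem_add_opts.mp hh with ⟨g, hg, rfl⟩ | ⟨p', hp', rfl⟩
  · obtain ⟨m, rfl, he⟩ := opts_ksum k g hg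
    refine ⟨6*m+4, t, by omega, ?_⟩
    rw [vv_eq m 4 (by omega)]
    have hvt : vv t = (ksum 0 mOneZeroSharp).add (piece t) := by
      have h2 := vv_eq 0 t ht
      rw [show 6*0 + t = t from by omega] at h2
      exact h2
    rw [hvt]
    exact (add_congr he (eqv_symm (eqv_zero_add _))).1
  · interval_cases t
    · simp [piece, opts_node] at hp'
    · simp [piece, opts_node] at hp'
    · have hp : p' = node [] := by simpa [piece, negOne, opts_node] using hp'
      subst hp
      refine ⟨6*k+0, 0, by omega, ?_⟩
      rw [vv_eq k 0 (by omega), vv_zero]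
      exact geXzz _
    · have hp : p' = node [] := by simpa [piece, negOne, opts_node] using hp'
      subst hp
      refine ⟨6*k+0, 1, by omega, ?_⟩
      rw [vv_eq k 0 (by omega), vv_one]
      exact geXzz _
    · have hp : p' = negOne ∨ p' = node [] := by
        simpa [piece, mOneZero, opts_node] using hp'
      rcases hp with rfl | rfl
      · refine ⟨6*k+2, 0, by omega, ?_⟩
        rw [vv_eq k 2 (by omega), vv_zero]
        exact geXzz _
      · refine ⟨6*k+1, 1, by omega, ?_⟩
        rw [vv_eq k 1 (by omega), vv_one]
        exact geXzz _
    · have hp : p' = negOne := by simpa [piece, negTwo, opts_node] using hp'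
      subst hp
      refine ⟨6*k+2, 1, by omega, ?_⟩
      rw [vv_eq k 2 (by omega), vv_one]
      exact geXzz _

theorem domStrip_opts_ne (n : ℕ) : (domStrip (n+2)).opts ≠ [] := by
  intro h
  have hm : (domStrip 0).add (domStrip (n-0)) ∈ (domStrip (n+2)).opts :=
    (domStrip_opts n _).mpr ⟨0, Nat.zero_le n, rfl⟩
  rw [h] at hm
  simp at hm

theorem ksum_opts_ne (m : ℕ) : (ksum (m+1) mOneZeroSharp).opts ≠ [] := by
  intro h
  have hm := mem_ksum_opts m
  rw [h] at hm
  simp at hm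

theorem vv_opts_ne (k t : ℕ) (ht : t < 6) (h2 : 2 ≤ 6*k+t) :
    ((ksum k mOneZeroSharp).add (piece t)).opts ≠ [] := by
  rw [Ne, add_opts_eq_nil]
  rintro ⟨h1, h2'⟩
  interval_cases t
  · obtain ⟨m, rfl⟩ : ∃ m, k = m + 1 := ⟨k-1, by omega⟩
    exact ksum_opts_ne m h1
  · obtain ⟨m, rfl⟩ : ∃ m, k = m + 1 := ⟨k-1, by omega⟩
    exact ksum_opts_ne m h1
  · simp [piece, negOne, opts_node] at h2'
  · simp [piece, negOne, opts_node] at h2'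
  · simp [piece, mOneZero, opts_node] at h2'
  · simp [piece, negTwo, opts_node] at h2'

theorem main : ∀ (n : ℕ), Eqv (domStrip n) (vv n)
  | 0 => by
    have h0 : domStrip 0 = node [] := by rw [domStrip]
    rw [h0, vv_zero]
    exact eqv_symm (eqv_zero_add (node []))
  | 1 => by
    have h0 : domStrip 1 = node [] := by rw [domStrip]
    rw [h0, vv_one]
    exact eqv_symm (eqv_zero_add (node []))
  | (n+2) => by
    obtain ⟨k, t, ht, hkt⟩ : ∃ k t, t < 6 ∧ n + 2 = 6*k + t :=
      ⟨(n+2)/6, (n+2)%6, by omega, by omega⟩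
    have hvv : vv (n+2) = (ksum k mOneZeroSharp).add (piece t) := by
      rw [hkt]; exact vv_eq k t ht
    rw [hvv]
    constructor
    · rw [ge_iff]
      refine ⟨?_, fun he => absurd he (domStrip_opts_ne n)⟩
      intro g hg
      obtain ⟨a, ha, rfl⟩ := (domStrip_opts n g).mp hg
      have e1 : Ge ((domStrip a).add (domStrip (n-a))) ((vv a).add (vv (n-a))) :=
        (add_congr (main a) (main (n-a))).1
      have hva : vv a = (ksum (a/6) mOneZeroSharp).add (piece (a%6)) := by
        conv_lhs => rw [show a = 6*(a/6) + a%6 from by omega]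
        exact vv_eq _ _ (by omega)
      have hvb : vv (n-a) = (ksum ((n-a)/6) mOneZeroSharp).add (piece ((n-a)%6)) := by
        conv_lhs => rw [show n-a = 6*((n-a)/6) + (n-a)%6 from by omega]
        exact vv_eq _ _ (by omega)
      obtain ⟨h, hh, hge⟩ := KEY1 k t (a/6) (a%6) ((n-a)/6) ((n-a)%6)
        (by omega) (by omega) ht (by omega)
      refine ⟨h, hh, ge_trans _ _ _ e1 ?_⟩
      rw [hva, hvb]
      exact hge
    · rw [ge_iff]
      refine ⟨?_, fun he => absurd he (vv_opts_ne k t ht (by omega))⟩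
      intro h hh
      obtain ⟨a, b, hab, hge⟩ := KEY2 k t n ht hkt h hh
      refine ⟨(domStrip a).add (domStrip (n-a)),
        (domStrip_opts n _).mpr ⟨a, by omega, rfl⟩, ?_⟩
      have hb : n - a = b := by omega
      rw [hb]
      exact ge_trans _ _ _ hge (add_congr (main a) (main b)).2
termination_by n => n
decreasing_by all_goals omega

theorem vv_step (m : ℕ) : Eqv (vv (m+6)) ((vv m).add mOneZeroSharp) := by
  unfold vv
  rw [show (m+6)/6 = m/6 + 1 from by omega, show (m+6)%6 = m%6 from by omega]
  exact eqv_swap (ksum (m/6) mOneZeroSharp) mOneZeroSharp (piece (m%6))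

theorem vv6k (k r : ℕ) (h : r < 6) :
    Eqv (domStrip (6*k+r)) ((ksum k mOneZeroSharp).add (piece r)) := by
  rw [← vv_eq k r h]
  exact main _

end LDE


/-- for all `n ≥ 19`, `D_n = D_{n−6} + (−1,0)#` in the dead-end
order; consequently the values are periodic: `D_{6k} = D_{6k+1} = k·(−1,0)#`,
`D_{6k+2} = D_{6k+3} = k·(−1,0)# + (−1)`, `D_{6k+4} = k·(−1,0)# + (−1,0)`,
`D_{6k+5} = k·(−1,0)# + (−2)`. -/
theorem stmt18 :
    (∀ n : ℕ, 19 ≤ n →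
      LDE.Eqv (domStrip n) ((domStrip (n - 6)).add mOneZeroSharp)) ∧
    (∀ k : ℕ,
      LDE.Eqv (domStrip (6*k)) (LDE.ksum k mOneZeroSharp) ∧
      LDE.Eqv (domStrip (6*k+1)) (LDE.ksum k mOneZeroSharp) ∧
      LDE.Eqv (domStrip (6*k+2)) ((LDE.ksum k mOneZeroSharp).add negOne) ∧
      LDE.Eqv (domStrip (6*k+3)) ((LDE.ksum k mOneZeroSharp).add negOne) ∧
      LDE.Eqv (domStrip (6*k+4)) ((LDE.ksum k mOneZeroSharp).add mOneZero) ∧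
      LDE.Eqv (domStrip (6*k+5)) ((LDE.ksum k mOneZeroSharp).add negTwo)) := by
  constructor
  · intro n hn
    obtain ⟨m, rfl⟩ : ∃ m, n = m + 6 := ⟨n-6, by omega⟩
    rw [show m + 6 - 6 = m from by omega]
    exact LDE.eqv_trans (LDE.main (m+6)) (LDE.eqv_trans (LDE.vv_step m)
      (LDE.add_congr (LDE.eqv_symm (LDE.main m)) (LDE.eqv_refl _)))
  · intro k
    refine ⟨?_, ?_, ?_, ?_, ?_, ?_⟩
    · exact LDE.eqv_trans (LDE.vv6k k 0 (by omega)) (LDE.eqv_add_zero _)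
    · exact LDE.eqv_trans (LDE.vv6k k 1 (by omega)) (LDE.eqv_add_zero _)
    · exact LDE.vv6k k 2 (by omega)
    · exact LDE.vv6k k 3 (by omega)
    · exact LDE.vv6k k 4 (by omega)
    · exact LDE.vv6k k 5 (by omega)
end
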